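/- Let q(t) be any one-parameter family of 2×2 joint distributions of the form q(t)_{ij} = q0_{ij} + (-1)^{i+j}·t, where q0 is a product distribution (q(0) ∈ 𝒫₀) and t ≥ 0 is feasible. If the mutual information τ(q(t)) = γ, then t ≤ √(γ/2). -/

import Mathlib

open Real Set

private lemma aux_hasDeriv (b : ℝ) (hb : 0 < b) :
    ∀ a : ℝ, 0 < a →
      HasDerivAt (fun a => a * (Real.log a - Real.log b) - (a - b) - (a - b)^2 / 2)
        (Real.log a - Real.log b - (a - b)) a := by
  intro a ha
  have h1 : HasDerivAt (fun a : ℝ => a * (Real.log a - Real.log b))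
      (1 * (Real.log a - Real.log b) + a * a⁻¹) a :=
    (hasDerivAt_id a).mul ((Real.hasDerivAt_log ha.ne').sub_const _)
  have h2 : HasDerivAt (fun a : ℝ => (a - b)^2 / 2) ((2 * (a - b)^1 * 1) / 2) a :=
    (((hasDerivAt_id a).sub_const b).pow 2).div_const 2
  have h3 := (h1.sub ((hasDerivAt_id a).sub_const b)).sub h2
  have : a * a⁻¹ = 1 := mul_inv_cancel₀ ha.ne'
  exact h3.congr_deriv (by rw [this]; ring)

private lemma key_ineq (a b : ℝ) (ha : 0 < a) (ha1 : a ≤ 1) (hb : 0 < b) (hb1 : b ≤ 1) :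
    a - b + (a - b)^2 / 2 ≤ a * Real.log (a / b) := by
  set F : ℝ → ℝ := fun a => a * (Real.log a - Real.log b) - (a - b) - (a - b)^2 / 2 with hF
  have hFb : F b = 0 := by simp [hF]
  have hderiv := aux_hasDeriv b hb
  have hdiff : ∀ s : Set ℝ, s ⊆ Set.Ioi 0 → DifferentiableOn ℝ F s := by
    intro s hs
    exact fun z hz => ((hderiv z (hs hz)).differentiableAt).differentiableWithinAt
  have hFa : 0 ≤ F a := by
    rcases le_total b a with hba | hab
    · have hmono : MonotoneOn F (Set.Icc b 1) := by
        apply monotoneOn_of_deriv_nonneg (convex_Icc b 1)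
        · exact (hdiff _ (fun z hz => lt_of_lt_of_le hb hz.1)).continuousOn
        · apply hdiff
          intro z hz
          rw [interior_Icc] at hz
          exact lt_of_lt_of_le hb hz.1.le
        · intro z hz
          rw [interior_Icc] at hz
          have hz0 : 0 < z := lt_of_lt_of_le hb hz.1.le
          rw [(hderiv z hz0).deriv]
          have h1 : 1 - b / z ≤ Real.log z - Real.log b := by
            have h := Real.one_sub_inv_le_log_of_pos (x := z / b) (by positivity)
            rw [Real.log_div hz0.ne' hb.ne', inv_div] at h
            exact h
          have h2 : z - b ≤ 1 - b / z := by
            have hkey : 1 - b / z - (z - b) = (z - b) * (1 - z) / z := by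
              field_simp
            have hnn : 0 ≤ (z - b) * (1 - z) / z :=
              div_nonneg (mul_nonneg (by linarith [hz.1]) (by linarith [hz.2])) hz0.le
            linarith
          linarith
      have := hmono (Set.mem_Icc.2 ⟨le_refl b, hb1⟩) (Set.mem_Icc.2 ⟨hba, ha1⟩) hba
      linarith [hFb ▸ this]
    · have hanti : AntitoneOn F (Set.Icc a b) := by
        apply antitoneOn_of_deriv_nonpos (convex_Icc a b)
        · exact (hdiff _ (fun z hz => lt_of_lt_of_le ha hz.1)).continuousOn
        · apply hdiff
          intro z hz
          rw [interior_Icc] at hz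
          exact lt_of_lt_of_le ha hz.1.le
        · intro z hz
          rw [interior_Icc] at hz
          have hz0 : 0 < z := lt_of_lt_of_le ha hz.1.le
          have h1 : Real.log z - Real.log b ≤ z / b - 1 := by
            have h := Real.log_le_sub_one_of_pos (x := z / b) (by positivity)
            rwa [Real.log_div hz0.ne' hb.ne'] at h
          have h2 : z / b - 1 ≤ z - b := by
            have hkey : z / b - 1 - (z - b) = -((b - z) * (1 - b) / b) := by
              field_simp; ring
            have hnn : 0 ≤ (b - z) * (1 - b) / b :=
              div_nonneg (mul_nonneg (by linarith [hz.2]) (by linarith)) hb.le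
            linarith
          rw [(hderiv z hz0).deriv]
          linarith
      have := hanti (Set.mem_Icc.2 ⟨le_refl a, hab⟩) (Set.mem_Icc.2 ⟨hab, le_refl b⟩) hab
      linarith [hFb ▸ this]
  have hlog : Real.log (a / b) = Real.log a - Real.log b := Real.log_div ha.ne' hb.ne'
  rw [hlog]
  simp only [hF] at hFa
  linarith

theorem stmt_9 (x y t γ : ℝ)
    (hx : x ∈ Set.Ioo (0:ℝ) 1) (hy : y ∈ Set.Ioo (0:ℝ) 1) (ht : 0 ≤ t)
    (h00 : 0 < x * y + t) (h01 : 0 < x * (1 - y) - t)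
    (h10 : 0 < (1 - x) * y - t) (h11 : 0 < (1 - x) * (1 - y) + t)
    (hτ : (x * y + t) * Real.log ((x * y + t) / (x * y))
        + (x * (1 - y) - t) * Real.log ((x * (1 - y) - t) / (x * (1 - y)))
        + ((1 - x) * y - t) * Real.log (((1 - x) * y - t) / ((1 - x) * y))
        + ((1 - x) * (1 - y) + t) * Real.log (((1 - x) * (1 - y) + t) / ((1 - x) * (1 - y)))
        = γ) :
    t ≤ Real.sqrt (γ / 2) := by
  obtain ⟨hx0, hx1⟩ := hx
  obtain ⟨hy0, hy1⟩ := hy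
  have hx1' : 1 - x > 0 := by linarith
  have hy1' : 1 - y > 0 := by linarith
  have hsum : (x * y + t) + (x * (1 - y) - t) + ((1 - x) * y - t) + ((1 - x) * (1 - y) + t)
      = 1 := by ring
  -- products are in (0,1]
  have hb00 : 0 < x * y := mul_pos hx0 hy0
  have hb01 : 0 < x * (1 - y) := mul_pos hx0 hy1'
  have hb10 : 0 < (1 - x) * y := mul_pos hx1' hy0
  have hb11 : 0 < (1 - x) * (1 - y) := mul_pos hx1' hy1'
  have hB00 : x * y ≤ 1 := mul_le_one₀ hx1.le hy0.le hy1.le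
  have hB01 : x * (1 - y) ≤ 1 := mul_le_one₀ hx1.le hy1'.le (by linarith)
  have hB10 : (1 - x) * y ≤ 1 := mul_le_one₀ (by linarith) hy0.le hy1.le
  have hB11 : (1 - x) * (1 - y) ≤ 1 := mul_le_one₀ (by linarith) hy1'.le (by linarith)
  -- entries are ≤ 1 (they are positive and sum to 1)
  have hA00 : x * y + t ≤ 1 := by linarith
  have hA01 : x * (1 - y) - t ≤ 1 := by linarith
  have hA10 : (1 - x) * y - t ≤ 1 := by linarith
  have hA11 : (1 - x) * (1 - y) + t ≤ 1 := by linarith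
  have k1 := key_ineq (x * y + t) (x * y) h00 hA00 hb00 hB00
  have k2 := key_ineq (x * (1 - y) - t) (x * (1 - y)) h01 hA01 hb01 hB01
  have k3 := key_ineq ((1 - x) * y - t) ((1 - x) * y) h10 hA10 hb10 hB10
  have k4 := key_ineq ((1 - x) * (1 - y) + t) ((1 - x) * (1 - y)) h11 hA11 hb11 hB11
  have e1 : x * y + t - x * y + (x * y + t - x * y) ^ 2 / 2 = t + t ^ 2 / 2 := by ring
  have e2 : x * (1 - y) - t - x * (1 - y) + (x * (1 - y) - t - x * (1 - y)) ^ 2 / 2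
      = -t + t ^ 2 / 2 := by ring
  have e3 : (1 - x) * y - t - (1 - x) * y + ((1 - x) * y - t - (1 - x) * y) ^ 2 / 2
      = -t + t ^ 2 / 2 := by ring
  have e4 : (1 - x) * (1 - y) + t - (1 - x) * (1 - y)
      + ((1 - x) * (1 - y) + t - (1 - x) * (1 - y)) ^ 2 / 2 = t + t ^ 2 / 2 := by ring
  have h2 : t ^ 2 ≤ γ / 2 := by linarith
  calc t = Real.sqrt (t ^ 2) := by rw [Real.sqrt_sq ht]
    _ ≤ Real.sqrt (γ / 2) := Real.sqrt_le_sqrt h2
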